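/- arXiv:1210.2995 — 2 statements merged into one kernel-verified Lean document; each statement's English description precedes it below -/
import Mathlib

section
/- K{{t}} with the higher topology is not bornological: the norm Σ_{i∈ℤ} x_i t^i ↦ sup_{i∈ℤ} |x_i| (the absolute value attached to the discrete valuation of K{{t}}) is bounded on every bounded subset of K{{t}}, but it is not continuous for the higher topology, its unit ball 𝒪{{t}} being closed but not open. -/
/-!
Common setting: `K` is a characteristic-zero local field (a finite extension of `ℚ_p`)
with ring of integers `𝒪 = {c : K | ‖c‖ ≤ 1}`, maximal ideal `𝔭 = {c : K | ‖c‖ < 1}`,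
residue field of cardinality `q` and the absolute value normalised by `‖π‖ = q⁻¹`.
We formalise the two-dimensional local fields `K((t))` (as `LaurentSeries K`) and
`K{{t}}` (as the submodule `mixedCarrier K` of `ℤ → K`), their higher topologies, and
the relevant functional-analytic notions (lattices, seminorms, boundedness,
c-compactness, compactoidness, completeness for nets, duality).
-/

open Filter Topology Set Pointwise
open scoped Classical

noncomputable section

namespace TwoDimLF

variable (K : Type) [NontriviallyNormedField K]

/-- `K` is a characteristic-zero nonarchimedean local field: the norm is nonarchimedean,
takes the values `q^ℤ` on `K˟` (with a uniformizer of norm `q⁻¹`), `K` is complete, locally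
compact, of characteristic zero, and the residue field has exactly `q` elements. -/
structure IsCharZeroLocalField (q : ℕ) : Prop where
  nonarch : ∀ x y : K, ‖x + y‖ ≤ max ‖x‖ ‖y‖
  one_lt_q : 1 < q
  norm_values : ∀ x : K, x ≠ 0 → ∃ n : ℤ, ‖x‖ = (q : ℝ) ^ (-n)
  exists_uniformizer : ∃ π : K, ‖π‖ = ((q : ℝ))⁻¹
  charZero : CharZero K
  locallyCompact : LocallyCompactSpace K
  complete : CompleteSpace K
  residue_card : ∃ s : Finset K, s.card = q ∧
    ∀ x : K, ‖x‖ ≤ 1 → ∃! y, y ∈ s ∧ ‖x - y‖ < 1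

/-- The fractional ideal `𝔭^n ⊆ K` for `n ∈ ℤ ∪ {-∞}`, with the convention `𝔭^(-∞) = K`. -/
def pB (q : ℕ) (n : WithBot ℤ) : Set K :=
  WithBot.recBotCoe Set.univ (fun m : ℤ => {x : K | ‖x‖ ≤ (q : ℝ) ^ (-m)}) n

/-- The fractional ideal `𝔭^n ⊆ K` for `n ∈ ℤ ∪ {∞}`, with the convention `𝔭^∞ = {0}`. -/
def pT (q : ℕ) (n : WithTop ℤ) : Set K :=
  WithTop.recTopCoe {0} (fun m : ℤ => {x : K | ‖x‖ ≤ (q : ℝ) ^ (-m)}) n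

/-- The fractional ideal `𝔭^n ⊆ K` for `n ∈ ℤ ∪ {±∞}`. -/
def pE (q : ℕ) (n : WithBot (WithTop ℤ)) : Set K :=
  WithBot.recBotCoe Set.univ (fun m : WithTop ℤ => pT K q m) n

/-- `q ^ n ∈ ℝ` for `n ∈ ℤ ∪ {-∞}`, with the convention `q^(-∞) = 0`. -/
def qpow (q : ℕ) (n : WithBot ℤ) : ℝ :=
  WithBot.recBotCoe 0 (fun m : ℤ => (q : ℝ) ^ m) n

/-- `1 - k` for `k ∈ ℤ ∪ {±∞}` (so `1 - (±∞) = ∓∞`). -/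
def oneSubE : WithBot (WithTop ℤ) → WithBot (WithTop ℤ) :=
  WithBot.recBotCoe ((⊤ : WithTop ℤ) : WithBot (WithTop ℤ))
    (WithTop.recTopCoe (⊥ : WithBot (WithTop ℤ))
      (fun z : ℤ => (((1 - z : ℤ) : WithTop ℤ) : WithBot (WithTop ℤ))))

section LCS

variable {V : Type} [AddCommGroup V] [Module K V]

/-- `S` is an `𝒪`-submodule of the `K`-vector space `V`, where `𝒪 = {c : K | ‖c‖ ≤ 1}`
is the ring of integers of `K`. -/
def IsOSubmodule (S : Set V) : Prop :=
  (0 : V) ∈ S ∧ (∀ x ∈ S, ∀ y ∈ S, x + y ∈ S) ∧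
    ∀ c : K, ‖c‖ ≤ 1 → ∀ x ∈ S, c • x ∈ S

/-- `S` is an `𝒪`-lattice in `V`: an `𝒪`-submodule such that every vector is carried
into `S` by some nonzero scalar. -/
def IsLatticeSet (S : Set V) : Prop :=
  IsOSubmodule K S ∧ ∀ v : V, ∃ a : K, a ≠ 0 ∧ a • v ∈ S

/-- A (nonarchimedean) seminorm on the `K`-vector space `V`. -/
def IsSeminorm (N : V → ℝ) : Prop :=
  (∀ (c : K) (v : V), N (c • v) = ‖c‖ * N v) ∧ ∀ v w : V, N (v + w) ≤ max (N v) (N w)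

/-- The gauge seminorm of a lattice `Λ ⊆ V`: `‖v‖_Λ = inf {‖a‖ : v ∈ aΛ}`. -/
def gaugeSeminorm (Λ : Set V) (v : V) : ℝ :=
  sInf {r : ℝ | ∃ a : K, v ∈ a • Λ ∧ r = ‖a‖}

/-- The group topology on `W` determined by a family `B` of neighbourhoods of zero:
neighbourhoods of `x` are generated by the translates `x + U`, `U ∈ B`. -/
def addTopologyOf {W : Type} [AddCommGroup W] (B : Set (Set W)) : TopologicalSpace W :=
  TopologicalSpace.mkOfNhds fun x => Filter.map (fun v => x + v) (⨅ U ∈ B, Filter.principal U)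

/-- `B` is (Von-Neumann) bounded for the locally convex topology `τ`: every open lattice
absorbs it. -/
def IsVNBounded (τ : TopologicalSpace V) (B : Set V) : Prop :=
  ∀ Λ : Set V, IsLatticeSet K Λ → IsOpen[τ] Λ → ∃ a : K, B ⊆ a • Λ

/-- The `𝒪`-submodule `A ⊆ V` is c-compact: for every decreasing filtered family of open
lattices `L i`, the canonical map `A → lim A/(L i ∩ A)` is surjective (phrased via
compatible families of representatives). -/
def IsCCompact (τ : TopologicalSpace V) (A : Set V) : Prop :=
  ∀ (ι : Type) (L : ι → Set V),
    (∀ i, IsLatticeSet K (L i) ∧ IsOpen[τ] (L i)) →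
    (∀ i j, ∃ k, L k ⊆ L i ∧ L k ⊆ L j) →
    ∀ x : ι → V, (∀ i, x i ∈ A) →
      (∀ i j, L j ⊆ L i → x j - x i ∈ L i) →
      ∃ a ∈ A, ∀ i, a - x i ∈ L i

/-- The `𝒪`-submodule `A ⊆ V` is compactoid: for every open lattice `Λ` there are finitely
many vectors `v₁, …, v_m ∈ V` with `A ⊆ Λ + 𝒪v₁ + ⋯ + 𝒪v_m`. -/
def IsCompactoid (τ : TopologicalSpace V) (A : Set V) : Prop :=
  ∀ Λ : Set V, IsLatticeSet K Λ → IsOpen[τ] Λ →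
    ∃ (m : ℕ) (v : Fin m → V),
      A ⊆ {u : V | ∃ l ∈ Λ, ∃ c : Fin m → K, (∀ j, ‖c j‖ ≤ 1) ∧ u = l + ∑ j, c j • v j}

/-- `A ⊆ V` is complete: every Cauchy net with values in `A` converges to a point of `A`
(for the topology `τ`). -/
def IsNetComplete (τ : TopologicalSpace V) (A : Set V) : Prop :=
  ∀ (ι : Type) [Preorder ι] [Nonempty ι],
    (∀ i j : ι, ∃ k, i ≤ k ∧ j ≤ k) →
    ∀ x : ι → V, (∀ i, x i ∈ A) →
      (∀ U ∈ @nhds V τ 0, ∃ i0, ∀ j ≥ i0, ∀ k ≥ i0, x j - x k ∈ U) →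
      ∃ a ∈ A, Filter.Tendsto x Filter.atTop (@nhds V τ a)

/-- `τ` makes `V` a locally convex topological `K`-vector space: it is a vector-space
topology whose filter of neighbourhoods of zero admits a basis of lattices. -/
def IsLCTVS (τ : TopologicalSpace V) : Prop :=
  @IsTopologicalAddGroup V τ _ ∧ @ContinuousSMul K V _ _ τ ∧
    ∀ S ∈ @nhds V τ 0, ∃ Λ : Set V, IsLatticeSet K Λ ∧ Λ ∈ @nhds V τ 0 ∧ Λ ⊆ S

/-- The topological dual of `(V, τ)`: continuous `K`-linear forms, as a set of functions. -/
def dualSet (τ : TopologicalSpace V) : Set (V → K) :=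
  {l | IsLinearMap K l ∧ @Continuous V K τ _ l}

/-- Basic neighbourhoods of zero for the `c`-topology on `V → K`: uniform convergence on
compactoid `𝒪`-submodules. -/
def cTopBasic (τ : TopologicalSpace V) : Set (Set (V → K)) :=
  {S | ∃ (B : Set V) (ε : ℝ), IsOSubmodule K B ∧ IsCompactoid K τ B ∧ 0 < ε ∧
    S = {l : V → K | ∀ x ∈ B, ‖l x‖ ≤ ε}}

/-- The `c`-topology (uniform convergence on compactoid `𝒪`-submodules) on `V → K`. -/
def cTop (τ : TopologicalSpace V) : TopologicalSpace (V → K) :=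
  addTopologyOf (cTopBasic K τ)

/-- The pseudo-polar `A^p = {l ∈ V' : |l(v)| < 1 for all v ∈ A}`. -/
def pseudoPolar (τ : TopologicalSpace V) (A : Set V) : Set (V → K) :=
  {l | l ∈ dualSet K τ ∧ ∀ v ∈ A, ‖l v‖ < 1}

/-- The pseudo-bipolar `A^{pp} = {v ∈ V : |l(v)| < 1 for all l ∈ A^p}`. -/
def pseudoBipolar (τ : TopologicalSpace V) (A : Set V) : Set V :=
  {v | ∀ l ∈ pseudoPolar K τ A, ‖l v‖ < 1}

end LCS

/-! ### The equal characteristic field `K((t))` -/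

/-- Basic neighbourhoods of zero for the higher topology on `K((t))`:
`Σ U_i t^i` where each `U_i` is an open neighbourhood of `0` in `K` and `U_i = K` for all
sufficiently large `i`. -/
def laurentBasic : Set (Set (LaurentSeries K)) :=
  {S | ∃ U : ℤ → Set K, (∀ i, IsOpen (U i) ∧ (0 : K) ∈ U i) ∧
    (∃ N : ℤ, ∀ i, N ≤ i → U i = Set.univ) ∧
    S = {f : LaurentSeries K | ∀ i, f.coeff i ∈ U i}}

/-- The higher topology on `K((t))`. -/
def laurentTop : TopologicalSpace (LaurentSeries K) := addTopologyOf (laurentBasic K)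

/-- `Λ = Σ_{i∈ℤ} 𝔭^{n_i} t^i ⊆ K((t))` for a sequence `(n_i) ⊆ ℤ ∪ {-∞}`. -/
def laurentLambda (q : ℕ) (n : ℤ → WithBot ℤ) : Set (LaurentSeries K) :=
  {f | ∀ i, f.coeff i ∈ pB K q (n i)}

/-- `B = Σ_{i∈ℤ} 𝔭^{k_i} t^i ⊆ K((t))` for a sequence `(k_i) ⊆ ℤ ∪ {∞}`. -/
def laurentPT (q : ℕ) (k : ℤ → WithTop ℤ) : Set (LaurentSeries K) :=
  {f | ∀ i, f.coeff i ∈ pT K q (k i)}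

/-- `A = Σ_{i∈ℤ} 𝔭^{k_i} t^i ⊆ K((t))` for a sequence `(k_i) ⊆ ℤ ∪ {±∞}`. -/
def laurentPE (q : ℕ) (k : ℤ → WithBot (WithTop ℤ)) : Set (LaurentSeries K) :=
  {f | ∀ i, f.coeff i ∈ pE K q (k i)}

/-- The admissible seminorm `‖Σ x_i t^i‖ = max_i ‖x_i‖ q^{n_i}` on `K((t))`. -/
def laurentSeminorm (q : ℕ) (n : ℤ → WithBot ℤ) (f : LaurentSeries K) : ℝ :=
  sSup {r : ℝ | ∃ i : ℤ, r = ‖f.coeff i‖ * qpow q (n i)}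

/-- The ring of integers `K[[t]] ⊆ K((t))`. -/
def laurentIntegers : Set (LaurentSeries K) := {f | ∀ i, i < 0 → f.coeff i = 0}

/-- The rank-two ring of integers `𝒪 + tK[[t]] ⊆ K((t))`. -/
def laurentRankTwo : Set (LaurentSeries K) :=
  {f | (∀ i, i < 0 → f.coeff i = 0) ∧ ‖f.coeff 0‖ ≤ 1}

/-- The pairing `γ(x)(y) = π₀(xy) = Σ_i x_i y_{-i}` on `K((t))`. -/
def laurentPairing (x y : LaurentSeries K) : K := ∑' i : ℤ, x.coeff i * y.coeff (-i)

/-! ### The mixed characteristic field `K{{t}}` -/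

/-- The underlying `K`-vector space of `K{{t}}`: functions `x : ℤ → K` (coefficients of
`Σ x_i t^i`) with `inf_i v_K(x_i) > -∞` (i.e. bounded norms) and `x_i → 0` as `i → -∞`. -/
def mixedCarrier : Submodule K (ℤ → K) where
  carrier := {x | (∃ C : ℝ, ∀ i, ‖x i‖ ≤ C) ∧ Filter.Tendsto x Filter.atBot (nhds (0 : K))}
  zero_mem' := ⟨⟨0, fun i => by simp⟩, tendsto_const_nhds⟩
  add_mem' := by
    rintro x y ⟨⟨C, hC⟩, hx⟩ ⟨⟨D, hD⟩, hy⟩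
    refine ⟨⟨C + D, fun i => (norm_add_le _ _).trans (add_le_add (hC i) (hD i))⟩, ?_⟩
    simpa [Pi.add_def] using hx.add hy
  smul_mem' := by
    rintro c x ⟨⟨C, hC⟩, hx⟩
    refine ⟨⟨‖c‖ * C, fun i => ?_⟩, ?_⟩
    · have h : ‖(c • x) i‖ = ‖c‖ * ‖x i‖ := by simp [norm_smul]
      rw [h]
      exact mul_le_mul_of_nonneg_left (hC i) (norm_nonneg c)
    · simpa [Pi.smul_def] using hx.const_smul c

/-- The field `K{{t}}`, as a `K`-vector space. -/
abbrev Mt := ↥(mixedCarrier K)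

/-- Basic neighbourhoods of zero for the higher topology on `K{{t}}`:
`Σ V_i t^i` where each `V_i` is an open neighbourhood of `0` in `K`, some `𝔭^c` is
contained in every `V_i`, and for every `l` eventually `𝔭^l ⊆ V_i`. -/
def mixedBasic (q : ℕ) : Set (Set (Mt K)) :=
  {S | ∃ Vs : ℤ → Set K, (∀ i, IsOpen (Vs i) ∧ (0 : K) ∈ Vs i) ∧
    (∃ c : ℤ, ∀ i, {x : K | ‖x‖ ≤ (q : ℝ) ^ (-c)} ⊆ Vs i) ∧
    (∀ l : ℤ, ∃ i0 : ℤ, ∀ i, i0 ≤ i → {x : K | ‖x‖ ≤ (q : ℝ) ^ (-l)} ⊆ Vs i) ∧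
    S = {f : Mt K | ∀ i, f.1 i ∈ Vs i}}

/-- The higher topology on `K{{t}}`. -/
def mixedTop (q : ℕ) : TopologicalSpace (Mt K) := addTopologyOf (mixedBasic K q)

/-- `Λ = Σ_{i∈ℤ} 𝔭^{n_i} t^i ⊆ K{{t}}` for a sequence `(n_i) ⊆ ℤ ∪ {-∞}`. -/
def mixedLambda (q : ℕ) (n : ℤ → WithBot ℤ) : Set (Mt K) :=
  {f | ∀ i, f.1 i ∈ pB K q (n i)}

/-- `B = Σ_{i∈ℤ} 𝔭^{k_i} t^i ⊆ K{{t}}` for a sequence `(k_i) ⊆ ℤ ∪ {∞}`. -/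
def mixedPT (q : ℕ) (k : ℤ → WithTop ℤ) : Set (Mt K) :=
  {f | ∀ i, f.1 i ∈ pT K q (k i)}

/-- `A = Σ_{i∈ℤ} 𝔭^{k_i} t^i ⊆ K{{t}}` for a sequence `(k_i) ⊆ ℤ ∪ {±∞}`. -/
def mixedPE (q : ℕ) (k : ℤ → WithBot (WithTop ℤ)) : Set (Mt K) :=
  {f | ∀ i, f.1 i ∈ pE K q (k i)}

/-- The admissible seminorm `‖Σ x_i t^i‖ = sup_i ‖x_i‖ q^{n_i}` on `K{{t}}`. -/
def mixedSeminorm (q : ℕ) (n : ℤ → WithBot ℤ) (f : Mt K) : ℝ :=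
  sSup {r : ℝ | ∃ i : ℤ, r = ‖f.1 i‖ * qpow q (n i)}

/-- The ring of integers `𝒪{{t}} ⊆ K{{t}}`. -/
def mixedIntegers : Set (Mt K) := {f | ∀ i, ‖f.1 i‖ ≤ 1}

/-- The rank-two ring of integers `Σ_{i<0} 𝔭 t^i + Σ_{i≥0} 𝒪 t^i ⊆ K{{t}}`. -/
def mixedRankTwo (q : ℕ) : Set (Mt K) :=
  {f | (∀ i : ℤ, i < 0 → ‖f.1 i‖ ≤ ((q : ℝ))⁻¹) ∧ ∀ i : ℤ, 0 ≤ i → ‖f.1 i‖ ≤ 1}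

/-- The monomial `t^i ∈ K{{t}}`. -/
def mixedT (i : ℤ) : Mt K :=
  ⟨fun j => if j = i then 1 else 0,
    ⟨⟨1, fun j => by by_cases h : j = i <;> simp [h]⟩, by
      refine (tendsto_const_nhds : Filter.Tendsto (fun _ : ℤ => (0 : K))
        Filter.atBot (nhds 0)).congr' ?_
      filter_upwards [Filter.eventually_le_atBot (i - 1)] with j hj
      have h : j ≠ i := by omega
      simp [h]⟩⟩

/-- Coefficients of the product of two elements of `K{{t}}` (Cauchy product). -/
def mixedMulCoeff (x y : Mt K) : ℤ → K := fun k => ∑' i : ℤ, x.1 i * y.1 (k - i)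

/-- Multiplication on `K{{t}}`. -/
def mixedMul (x y : Mt K) : Mt K :=
  if h : mixedMulCoeff K x y ∈ mixedCarrier K then ⟨_, h⟩ else 0

/-- The pairing `γ(x)(y) = π₀(xy) = Σ_i x_i y_{-i}` on `K{{t}}`. -/
def mixedPairing (x y : Mt K) : K := ∑' i : ℤ, x.1 i * y.1 (-i)


section Statement10Aux

variable {K : Type} [NontriviallyNormedField K] {q : ℕ}

lemma IsCharZeroLocalField.one_lt_q' (hK : IsCharZeroLocalField K q) : (1:ℝ) < (q:ℝ) := by
  exact_mod_cast hK.one_lt_q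

lemma norm_le_iff_lt (hK : IsCharZeroLocalField K q) (m : ℤ) (x : K) :
    ‖x‖ ≤ (q:ℝ)^m ↔ ‖x‖ < (q:ℝ)^(m+1) := by
  have hq1 := hK.one_lt_q'
  constructor
  · intro h; exact lt_of_le_of_lt h (zpow_lt_zpow_right₀ hq1 (by omega))
  · intro h
    rcases eq_or_ne x 0 with rfl | hx
    · simp only [norm_zero]
      positivity
    · obtain ⟨n, hn⟩ := hK.norm_values x hx
      rw [hn] at h ⊢
      have hlt : -n < m + 1 := by
        by_contra hcon
        exact absurd h (not_lt.2 (zpow_le_zpow_right₀ hq1.le (by omega)))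
      exact zpow_le_zpow_right₀ hq1.le (by omega)

lemma ball_isOpen (hK : IsCharZeroLocalField K q) (m : ℤ) :
    IsOpen {x : K | ‖x‖ ≤ (q:ℝ)^m} := by
  have h : {x : K | ‖x‖ ≤ (q:ℝ)^m} = {x : K | ‖x‖ < (q:ℝ)^(m+1)} :=
    Set.ext fun x => norm_le_iff_lt hK m x
  rw [h]
  exact isOpen_lt continuous_norm continuous_const

lemma mt_bddC (f : Mt K) : ∃ C : ℝ, ∀ i, ‖f.1 i‖ ≤ C := f.2.1

lemma mt_bdd (f : Mt K) : BddAbove (Set.range fun i => ‖f.1 i‖) := by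
  obtain ⟨C, hC⟩ := mt_bddC f
  exact ⟨C, by rintro r ⟨i, rfl⟩; exact hC i⟩

lemma univ_mem_basic : (Set.univ : Set (Mt K)) ∈ mixedBasic K q := by
  refine ⟨fun _ => Set.univ, fun i => ⟨isOpen_univ, trivial⟩, ⟨0, fun i => Set.subset_univ _⟩,
    fun l => ⟨0, fun i _ => Set.subset_univ _⟩, by ext f; simp⟩

lemma basic_directed (hK : IsCharZeroLocalField K q) :
    DirectedOn ((fun U : Set (Mt K) => Filter.principal U) ⁻¹'o fun x1 x2 => x1 ≥ x2)
      (mixedBasic K q) := by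
  have hq1 := hK.one_lt_q'
  rintro U ⟨Vs, hV1, ⟨c1, hc1⟩, hl1, rfl⟩ V ⟨Ws, hW1, ⟨c2, hc2⟩, hl2, rfl⟩
  refine ⟨{f : Mt K | ∀ i, f.1 i ∈ Vs i ∩ Ws i}, ⟨fun i => Vs i ∩ Ws i,
    fun i => ⟨(hV1 i).1.inter (hW1 i).1, (hV1 i).2, (hW1 i).2⟩, ⟨max c1 c2, fun i => ?_⟩,
    fun l => ?_, rfl⟩, ?_, ?_⟩
  · intro x hx
    have hx' : ‖x‖ ≤ (q:ℝ)^(-(max c1 c2)) := hx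
    constructor
    · exact hc1 i (le_trans hx' (zpow_le_zpow_right₀ hq1.le (by omega)))
    · exact hc2 i (le_trans hx' (zpow_le_zpow_right₀ hq1.le (by omega)))
  · obtain ⟨i1, hi1⟩ := hl1 l
    obtain ⟨i2, hi2⟩ := hl2 l
    exact ⟨max i1 i2, fun i hi => Set.subset_inter (hi1 i (le_trans (le_max_left _ _) hi))
      (hi2 i (le_trans (le_max_right _ _) hi))⟩
  · exact Filter.principal_mono.2 fun f hf i => (hf i).1
  · exact Filter.principal_mono.2 fun f hf i => (hf i).2

lemma mixedTop_isOpen_iff (hK : IsCharZeroLocalField K q) (S : Set (Mt K)) :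
    IsOpen[mixedTop K q] S ↔ ∀ x ∈ S, ∃ U ∈ mixedBasic K q, ∀ u ∈ U, x + u ∈ S := by
  have hdef : IsOpen[mixedTop K q] S ↔ ∀ x ∈ S,
      S ∈ Filter.map (fun v => x + v) (⨅ U ∈ mixedBasic K q, Filter.principal U) := Iff.rfl
  rw [hdef]
  refine forall₂_congr fun x hx => ?_
  rw [Filter.mem_map, Filter.mem_biInf_of_directed (basic_directed hK) ⟨_, univ_mem_basic⟩]
  simp only [Filter.mem_principal]
  constructor
  · rintro ⟨U, hU, hsub⟩; exact ⟨U, hU, fun u hu => hsub hu⟩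
  · rintro ⟨U, hU, hsub⟩; exact ⟨U, hU, fun u hu => hsub u hu⟩

/-- The open lattice with radii `q^(h i)`. -/
def mtBall (K : Type) [NontriviallyNormedField K] (q : ℕ) (h : ℤ → ℤ) : Set (Mt K) :=
  {f | ∀ i, ‖f.1 i‖ ≤ (q:ℝ)^(h i)}

lemma mtBall_mem_basic (hK : IsCharZeroLocalField K q) (h : ℤ → ℤ) (h0 : ∀ i, 0 ≤ h i)
    (hl : ∀ l : ℤ, ∃ i0, ∀ i, i0 ≤ i → l ≤ h i) : mtBall K q h ∈ mixedBasic K q := by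
  have hq1 := hK.one_lt_q'
  have hq0 : (0:ℝ) < q := lt_trans one_pos hq1
  refine ⟨fun i => {x : K | ‖x‖ ≤ (q:ℝ)^(h i)}, fun i => ⟨ball_isOpen hK _, by
    simp only [Set.mem_setOf_eq, norm_zero]; positivity⟩, ⟨0, fun i x hx => ?_⟩,
    fun l => ?_, rfl⟩
  · have hx' : ‖x‖ ≤ (q:ℝ)^(-(0:ℤ)) := hx
    exact le_trans hx' (zpow_le_zpow_right₀ hq1.le (by have := h0 i; omega))
  · obtain ⟨i0, hi0⟩ := hl (-l)
    exact ⟨i0, fun i hi x hx => le_trans hx (zpow_le_zpow_right₀ hq1.le (hi0 i hi))⟩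

lemma mtBall_lattice (hK : IsCharZeroLocalField K q) (h : ℤ → ℤ) (h0 : ∀ i, 0 ≤ h i) :
    IsLatticeSet K (mtBall K q h) := by
  have hq1 := hK.one_lt_q'
  have hq0 : (0:ℝ) < q := lt_trans one_pos hq1
  have hone : ∀ i, (1:ℝ) ≤ (q:ℝ)^(h i) := fun i => by
    calc (1:ℝ) = (q:ℝ)^(0:ℤ) := (zpow_zero _).symm
    _ ≤ _ := zpow_le_zpow_right₀ hq1.le (h0 i)
  constructor
  · refine ⟨fun i => ?_, fun x hx y hy i => ?_, fun c hc x hx i => ?_⟩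
    · show ‖(0 : Mt K).1 i‖ ≤ _
      rw [ZeroMemClass.coe_zero]
      simp only [Pi.zero_apply, norm_zero]
      positivity
    · have hxy : (x + y).1 i = x.1 i + y.1 i := rfl
      rw [hxy]
      exact le_trans (hK.nonarch _ _) (max_le (hx i) (hy i))
    · have hcx : (c • x).1 i = c * x.1 i := rfl
      rw [hcx, norm_mul]
      exact le_trans (mul_le_of_le_one_left (norm_nonneg _) hc) (hx i)
  · intro v
    obtain ⟨C, hC⟩ := mt_bddC v
    obtain ⟨π, hπ⟩ := hK.exists_uniformizer
    have hπ0 : π ≠ 0 := by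
      intro hz; rw [hz, norm_zero] at hπ
      exact absurd hπ.symm (by positivity)
    obtain ⟨m, hm⟩ := pow_unbounded_of_one_lt C hq1
    refine ⟨π^m, pow_ne_zero m hπ0, fun i => ?_⟩
    have hsm : (π^m • v).1 i = π^m * v.1 i := rfl
    rw [hsm, norm_mul, norm_pow, hπ]
    calc ((q:ℝ))⁻¹^m * ‖v.1 i‖ ≤ ((q:ℝ))⁻¹^m * C := by
          apply mul_le_mul_of_nonneg_left (hC i); positivity
    _ ≤ ((q:ℝ))⁻¹^m * (q:ℝ)^m := by
          apply mul_le_mul_of_nonneg_left hm.le; positivity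
    _ = 1 := by rw [← mul_pow, inv_mul_cancel₀ (ne_of_gt hq0), one_pow]
    _ ≤ _ := hone i

lemma mtBall_isOpen (hK : IsCharZeroLocalField K q) (h : ℤ → ℤ) (h0 : ∀ i, 0 ≤ h i)
    (hl : ∀ l : ℤ, ∃ i0, ∀ i, i0 ≤ i → l ≤ h i) : IsOpen[mixedTop K q] (mtBall K q h) := by
  rw [mixedTop_isOpen_iff hK]
  intro x hx
  refine ⟨mtBall K q h, mtBall_mem_basic hK h h0 hl, fun u hu i => ?_⟩
  have hxy : (x + u).1 i = x.1 i + u.1 i := rfl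
  rw [hxy]
  exact le_trans (hK.nonarch _ _) (max_le (hx i) (hu i))

end Statement10Aux
section Statement10Aux2

variable {K : Type} [NontriviallyNormedField K] {q : ℕ}

lemma bounded_coeffs (hK : IsCharZeroLocalField K q) {B : Set (Mt K)}
    (hB : IsVNBounded K (mixedTop K q) B) : ∃ C : ℝ, ∀ f ∈ B, ∀ i, ‖f.1 i‖ ≤ C := by
  by_contra hcon
  push_neg at hcon
  have hq1 := hK.one_lt_q'
  -- Step A : coefficients in degrees `≤ M` are uniformly bounded on `B`
  have stepA : ∀ M : ℤ, ∃ C : ℝ, ∀ f ∈ B, ∀ i ≤ M, ‖f.1 i‖ ≤ C := by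
    intro M
    set h : ℤ → ℤ := fun i => ((i - M).toNat : ℤ) with hh
    have h0 : ∀ i, 0 ≤ h i := fun i => Int.natCast_nonneg _
    have hl : ∀ l : ℤ, ∃ i0, ∀ i, i0 ≤ i → l ≤ h i := fun l =>
      ⟨M + l, fun i hi => le_trans (by omega) (Int.self_le_toNat (i - M))⟩
    obtain ⟨a, ha⟩ := hB _ (mtBall_lattice hK h h0) (mtBall_isOpen hK h h0 hl)
    refine ⟨‖a‖, fun f hf i hi => ?_⟩
    obtain ⟨g, hg, rfl⟩ := Set.mem_smul_set.1 (ha hf)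
    have hgi := hg i
    have hhi : h i = 0 := by simp only [hh]; omega
    rw [hhi, zpow_zero] at hgi
    have hsm : (a • g).1 i = a * g.1 i := rfl
    calc ‖(a • g).1 i‖ = ‖a‖ * ‖g.1 i‖ := by rw [hsm, norm_mul]
    _ ≤ ‖a‖ * 1 := mul_le_mul_of_nonneg_left hgi (norm_nonneg a)
    _ = ‖a‖ := mul_one _
  -- (★) : arbitrarily large coefficients occur in arbitrarily large degrees
  have star : ∀ M : ℤ, ∀ C : ℝ, ∃ p : Mt K × ℤ, p.1 ∈ B ∧ M < p.2 ∧ C < ‖p.1.1 p.2‖ := by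
    intro M C
    obtain ⟨CM, hCM⟩ := stepA M
    obtain ⟨f, hf, i, hi⟩ := hcon (max C CM)
    refine ⟨(f, i), hf, ?_, lt_of_le_of_lt (le_max_left _ _) hi⟩
    by_contra hle
    exact absurd (hCM f hf i (by omega)) (not_le.2 (lt_of_le_of_lt (le_max_right _ _) hi))
  choose G hG1 hG2 hG3 using star
  -- recursive construction of a sequence of large coefficients in increasing degrees
  set s : ℕ → Mt K × ℤ := fun k =>
    Nat.rec (G 0 ((q:ℝ)^(2*0))) (fun k ih => G ih.2 ((q:ℝ)^(2*(k+1)))) k with hs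
  have hs0 : s 0 = G 0 ((q:ℝ)^(2*0)) := rfl
  have hssucc : ∀ k, s (k+1) = G (s k).2 ((q:ℝ)^(2*(k+1))) := fun k => rfl
  have hsB : ∀ k, (s k).1 ∈ B := by
    intro k
    cases k with
    | zero => rw [hs0]; exact hG1 _ _
    | succ k => rw [hssucc]; exact hG1 _ _
  have hsN : ∀ k, (q:ℝ)^(2*k) < ‖(s k).1.1 ((s k).2)‖ := by
    intro k
    cases k with
    | zero => rw [hs0]; exact hG3 _ _
    | succ k => rw [hssucc]; exact hG3 _ _
  have hmono : StrictMono fun k => (s k).2 := by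
    apply strictMono_nat_of_lt_succ
    intro k
    show (s k).2 < (s (k+1)).2
    rw [hssucc]
    exact hG2 _ _
  -- the lattice defeating boundedness of the sup-norm
  set h : ℤ → ℤ := fun i => if hk : ∃ k : ℕ, (s k).2 = i then (hk.choose : ℤ) else i.toNat
    with hhdef
  have h0 : ∀ i, 0 ≤ h i := by
    intro i
    simp only [hhdef]
    split_ifs <;> exact Int.natCast_nonneg _
  have hl : ∀ l : ℤ, ∃ i0, ∀ i, i0 ≤ i → l ≤ h i := by
    intro l
    refine ⟨max ((s l.toNat).2) l, fun i hi => ?_⟩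
    simp only [hhdef]
    by_cases hk : ∃ k : ℕ, (s k).2 = i
    · rw [dif_pos hk]
      have hck : (s hk.choose).2 = i := hk.choose_spec
      have h1 : (s l.toNat).2 ≤ (s hk.choose).2 := by
        rw [hck]; exact le_trans (le_max_left _ _) hi
      have h2 : l.toNat ≤ hk.choose := hmono.le_iff_le.1 h1
      calc l ≤ (l.toNat : ℤ) := Int.self_le_toNat l
      _ ≤ _ := by exact_mod_cast h2
    · rw [dif_neg hk]
      calc l ≤ i := le_trans (le_max_right _ _) hi
      _ ≤ (i.toNat : ℤ) := Int.self_le_toNat i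
  obtain ⟨a, ha⟩ := hB _ (mtBall_lattice hK h h0) (mtBall_isOpen hK h h0 hl)
  obtain ⟨m, hm⟩ := pow_unbounded_of_one_lt ‖a‖ hq1
  obtain ⟨g, hg, hfg⟩ := Set.mem_smul_set.1 (ha (hsB m))
  have hval : h ((s m).2) = (m:ℤ) := by
    have hk : ∃ k : ℕ, (s k).2 = (s m).2 := ⟨m, rfl⟩
    have heq : hk.choose = m :=
      hmono.injective (hk.choose_spec : (fun k => (s k).2) hk.choose = (fun k => (s k).2) m)
    simp only [hhdef]
    rw [dif_pos hk, heq]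
  have hcoeff : ‖(s m).1.1 ((s m).2)‖ ≤ ‖a‖ * (q:ℝ)^m := by
    rw [← hfg]
    have hsm : (a • g).1 ((s m).2) = a * g.1 ((s m).2) := rfl
    rw [hsm, norm_mul]
    have := hg ((s m).2)
    rw [hval] at this
    rw [zpow_natCast] at this
    exact mul_le_mul_of_nonneg_left this (norm_nonneg a)
  have hqm : (0:ℝ) < (q:ℝ)^m := by positivity
  have hfinal : (q:ℝ)^(2*m) < (q:ℝ)^m * (q:ℝ)^m :=
    lt_of_lt_of_le (lt_of_lt_of_le (hsN m) hcoeff) (mul_le_mul_of_nonneg_right hm.le hqm.le)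
  rw [two_mul, pow_add] at hfinal
  exact lt_irrefl _ hfinal

end Statement10Aux2
section Statement10Aux3

variable {K : Type} [NontriviallyNormedField K] {q : ℕ}

lemma integers_closed (hK : IsCharZeroLocalField K q) :
    IsClosed[mixedTop K q] (mixedIntegers K) := by
  have hq1 := hK.one_lt_q'
  rw [← @isOpen_compl_iff _ _ (mixedTop K q)]
  rw [mixedTop_isOpen_iff hK]
  intro x hx
  obtain ⟨i₀, hi₀⟩ : ∃ i, 1 < ‖x.1 i‖ := by
    by_contra hcon
    push_neg at hcon
    exact hx fun i => hcon i
  have hx0 : x.1 i₀ ≠ 0 := by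
    intro hz; rw [hz, norm_zero] at hi₀; linarith
  obtain ⟨n, hn⟩ := hK.norm_values _ hx0
  set Vs : ℤ → Set K := fun i => if i = i₀ then {y : K | ‖y‖ ≤ (q:ℝ)^(-(n+1))}
    else {y : K | ‖y‖ ≤ (q:ℝ)^(max i (-(n+1)))} with hVs
  refine ⟨{f : Mt K | ∀ i, f.1 i ∈ Vs i}, ⟨Vs, fun i => ?_, ⟨n+1, fun i => ?_⟩, fun l => ?_,
    rfl⟩, ?_⟩
  · -- each Vs i is an open neighbourhood of 0
    simp only [hVs]
    split_ifs
    all_goals exact ⟨ball_isOpen hK _, by simp only [Set.mem_setOf_eq, norm_zero]; positivity⟩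
  · -- 𝔭^(n+1) is contained in every Vs i
    simp only [hVs]
    split_ifs
    · exact fun y hy => hy
    · exact fun y hy => le_trans hy (zpow_le_zpow_right₀ hq1.le (le_max_right _ _))
  · -- for every l, eventually 𝔭^l ⊆ Vs i
    refine ⟨max (-l) (i₀ + 1), fun i hi => ?_⟩
    have hne : i ≠ i₀ := by omega
    simp only [hVs, if_neg hne]
    intro y hy
    refine le_trans hy (zpow_le_zpow_right₀ hq1.le ?_)
    have : -l ≤ i := le_trans (le_max_left _ _) hi
    omega
  · -- translates of the basic set avoid the integers
    intro u hu hmem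
    have hu0 : ‖u.1 i₀‖ ≤ (q:ℝ)^(-(n+1)) := by
      have := hu i₀
      simpa only [hVs, if_pos rfl, Set.mem_setOf_eq] using this
    have hult : ‖u.1 i₀‖ < ‖x.1 i₀‖ := by
      rw [hn]
      exact lt_of_le_of_lt hu0 (zpow_lt_zpow_right₀ hq1 (by omega))
    have hadd : (x + u).1 i₀ = x.1 i₀ + u.1 i₀ := rfl
    have hle : ‖(x + u).1 i₀‖ ≤ 1 := hmem i₀
    have h1 : ‖x.1 i₀‖ ≤ max ‖x.1 i₀ + u.1 i₀‖ ‖u.1 i₀‖ := by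
      have h2 := hK.nonarch (x.1 i₀ + u.1 i₀) (-(u.1 i₀))
      rw [add_neg_cancel_right, norm_neg] at h2
      exact h2
    rcases le_max_iff.1 h1 with h2 | h2
    · rw [hadd] at hle
      linarith
    · linarith

lemma integers_not_open (hK : IsCharZeroLocalField K q) :
    ¬ IsOpen[mixedTop K q] (mixedIntegers K) := by
  have hq1 := hK.one_lt_q'
  have hq0 : (0:ℝ) < q := lt_trans one_pos hq1
  intro hop
  rw [mixedTop_isOpen_iff hK] at hop
  have h0mem : (0 : Mt K) ∈ mixedIntegers K := by
    intro i
    show ‖(0 : Mt K).1 i‖ ≤ 1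
    rw [ZeroMemClass.coe_zero]
    simp
  obtain ⟨U, ⟨Vs, hV1, hVc, hVl, rfl⟩, hsub⟩ := hop 0 h0mem
  obtain ⟨i0, hi0⟩ := hVl (-1)
  obtain ⟨π, hπ⟩ := hK.exists_uniformizer
  have hπ0 : π ≠ 0 := by
    intro hz; rw [hz, norm_zero] at hπ
    exact absurd hπ.symm (by positivity)
  set g : Mt K := π⁻¹ • mixedT K i0 with hg
  have hginv : g.1 i0 = π⁻¹ := by
    have : g.1 i0 = π⁻¹ * (if i0 = i0 then (1:K) else 0) := rfl
    rw [this, if_pos rfl, mul_one]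
  have hgmem : g ∈ {f : Mt K | ∀ i, f.1 i ∈ Vs i} := by
    intro i
    by_cases h : i = i0
    · subst h
      rw [hginv]
      apply hi0 i le_rfl
      show ‖π⁻¹‖ ≤ (q:ℝ)^(-(-1:ℤ))
      rw [norm_inv, hπ, inv_inv]
      simp
    · have hz : g.1 i = 0 := by
        have : g.1 i = π⁻¹ * (if i = i0 then (1:K) else 0) := rfl
        rw [this, if_neg h, mul_zero]
      rw [hz]
      exact (hV1 i).2
  have hmem := hsub g hgmem
  rw [zero_add] at hmem
  have hle : ‖g.1 i0‖ ≤ 1 := hmem i0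
  rw [hginv, norm_inv, hπ, inv_inv] at hle
  linarith

end Statement10Aux3
/-- `K{{t}}` with the higher topology is not bornological: the norm
`Σ x_i t^i ↦ sup_i ‖x_i‖` (the absolute value attached to the discrete valuation of `K{{t}}`)
is bounded on every bounded subset of `K{{t}}`, but it is not continuous for the higher
topology, its unit ball `𝒪{{t}}` being closed but not open. -/
theorem statement10 (q : ℕ) (hK : IsCharZeroLocalField K q) :
    IsSeminorm K (fun f : Mt K => ⨆ i : ℤ, ‖f.1 i‖) ∧
    (∀ f : Mt K, (⨆ i : ℤ, ‖f.1 i‖) = 0 → f = 0) ∧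
    (∀ B : Set (Mt K), IsVNBounded K (mixedTop K q) B →
      ∃ C : ℝ, ∀ f ∈ B, (⨆ i : ℤ, ‖f.1 i‖) ≤ C) ∧
    ¬ @Continuous _ _ (mixedTop K q) _ (fun f : Mt K => ⨆ i : ℤ, ‖f.1 i‖) ∧
    {f : Mt K | (⨆ i : ℤ, ‖f.1 i‖) ≤ 1} = mixedIntegers K ∧
    IsClosed[mixedTop K q] (mixedIntegers K) ∧
    ¬ IsOpen[mixedTop K q] (mixedIntegers K) ∧
    ¬ (∀ N : Mt K → ℝ, IsSeminorm K N →
        (∀ B : Set (Mt K), IsVNBounded K (mixedTop K q) B → ∃ C : ℝ, ∀ f ∈ B, N f ≤ C) →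
        @Continuous _ _ (mixedTop K q) _ N) := by
  have hq1 := hK.one_lt_q'
  set N : Mt K → ℝ := fun f => ⨆ i : ℤ, ‖f.1 i‖ with hN
  have hNle : ∀ (f : Mt K) (i : ℤ), ‖f.1 i‖ ≤ N f := fun f i => le_ciSup (mt_bdd f) i
  have hNsup : ∀ (f : Mt K) (C : ℝ), (∀ i, ‖f.1 i‖ ≤ C) → N f ≤ C := fun f C h => ciSup_le h
  have hsemi : IsSeminorm K N := by
    constructor
    · intro c v
      have h1 : (fun i : ℤ => ‖(c • v).1 i‖) = fun i : ℤ => ‖c‖ * ‖v.1 i‖ := by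
        funext i
        have : (c • v).1 i = c * v.1 i := rfl
        rw [this, norm_mul]
      show (⨆ i : ℤ, ‖(c • v).1 i‖) = ‖c‖ * ⨆ i : ℤ, ‖v.1 i‖
      rw [h1, ← Real.mul_iSup_of_nonneg (norm_nonneg c)]
    · intro v w
      apply ciSup_le
      intro i
      have hvw : (v + w).1 i = v.1 i + w.1 i := rfl
      rw [hvw]
      exact le_trans (hK.nonarch _ _) (max_le_max (hNle v i) (hNle w i))
  have hzero : ∀ f : Mt K, N f = 0 → f = 0 := by
    intro f h0
    apply Subtype.ext
    rw [ZeroMemClass.coe_zero]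
    funext i
    have := hNle f i
    rw [h0] at this
    exact norm_le_zero_iff.1 this
  have hbddnorm : ∀ B : Set (Mt K), IsVNBounded K (mixedTop K q) B →
      ∃ C : ℝ, ∀ f ∈ B, N f ≤ C := by
    intro B hB
    obtain ⟨C, hC⟩ := bounded_coeffs hK hB
    exact ⟨C, fun f hf => hNsup f C (hC f hf)⟩
  have hball : {f : Mt K | N f ≤ 1} = mixedIntegers K :=
    Set.ext fun f => ⟨fun h i => le_trans (hNle f i) h, fun h => hNsup f 1 h⟩
  have hnotopen : ¬ IsOpen[mixedTop K q] (mixedIntegers K) := integers_not_open hK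
  have hnotcont : ¬ @Continuous _ _ (mixedTop K q) _ N := by
    intro hcont
    have hopen : IsOpen[mixedTop K q] (N ⁻¹' Set.Iio (q:ℝ)) :=
      @Continuous.isOpen_preimage (Mt K) ℝ (mixedTop K q) _ N hcont _ isOpen_Iio
    have heq : N ⁻¹' Set.Iio (q:ℝ) = mixedIntegers K := by
      ext f
      constructor
      · intro hf i
        have h1 : ‖f.1 i‖ < (q:ℝ)^((0:ℤ)+1) := by
          rw [zero_add, zpow_one]
          exact lt_of_le_of_lt (hNle f i) hf
        have h2 := (norm_le_iff_lt hK 0 (f.1 i)).2 h1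
        rwa [zpow_zero] at h2
      · intro hf
        have : N f ≤ 1 := hNsup f 1 hf
        exact lt_of_le_of_lt this hq1
    rw [heq] at hopen
    exact hnotopen hopen
  refine ⟨hsemi, hzero, hbddnorm, hnotcont, hball, integers_closed hK, hnotopen, ?_⟩
  intro hall
  exact hnotcont (hall N hsemi hbddnorm)

end TwoDimLF
end
end

section
/- The ring of integers K[[t]] is a complete 𝒪-submodule of K((t)) with the higher topology, and the ring of integers 𝒪{{t}} is a complete 𝒪-submodule of K{{t}} with the higher topology: in each case every Cauchy net of elements of the ring converges to an element of the ring. Consequently, the rank-two rings of integers 𝒪 + tK[[t]] ⊂ K((t)) and Σ_{i<0} 𝔭 t^i + Σ_{i≥0} 𝒪 t^i ⊂ K{{t}}, being closed subsets of these complete submodules, are also complete. -/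
/-!
Common setting: `K` is a characteristic-zero local field (a finite extension of `ℚ_p`)
with ring of integers `𝒪 = {c : K | ‖c‖ ≤ 1}`, maximal ideal `𝔭 = {c : K | ‖c‖ < 1}`,
residue field of cardinality `q` and the absolute value normalised by `‖π‖ = q⁻¹`.
We formalise the two-dimensional local fields `K((t))` (as `LaurentSeries K`) and
`K{{t}}` (as the submodule `mixedCarrier K` of `ℤ → K`), their higher topologies, and
the relevant functional-analytic notions (lattices, seminorms, boundedness,
c-compactness, compactoidness, completeness for nets, duality).
-/

open Filter Topology Set Pointwise
open scoped Classical

noncomputable section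

namespace TwoDimLF

variable (K : Type) [NontriviallyNormedField K]

/-! ### Auxiliary lemmas for Statement 12 -/

section AuxAddTop

variable {W : Type} [AddCommGroup W] (B : Set (Set W))

lemma mem_iInf_basic (hne : ∃ U, U ∈ B)
    (hdir : ∀ U ∈ B, ∀ V ∈ B, ∃ T ∈ B, T ⊆ U ∧ T ⊆ V) {s : Set W} :
    s ∈ (⨅ U ∈ B, Filter.principal U) ↔ ∃ U ∈ B, U ⊆ s := by
  obtain ⟨U0, hU0⟩ := hne
  haveI : Nonempty B := ⟨⟨U0, hU0⟩⟩
  have hd : Directed (· ≥ ·) fun U : B => Filter.principal (U : Set W) := by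
    rintro ⟨U, hU⟩ ⟨V, hV⟩
    obtain ⟨T, hT, h1, h2⟩ := hdir U hU V hV
    exact ⟨⟨T, hT⟩, Filter.principal_mono.2 h1, Filter.principal_mono.2 h2⟩
  rw [iInf_subtype', Filter.mem_iInf_of_directed hd]
  simp only [Filter.mem_principal, Subtype.exists, exists_prop]

lemma basic_mem_nhds {U : Set W} (hU : U ∈ B) (h0 : (0 : W) ∈ U)
    (hadd : ∀ b ∈ U, ∀ u ∈ U, b + u ∈ U) :
    U ∈ @nhds W (addTopologyOf B) 0 := by
  letI τ := addTopologyOf B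
  have hopen : IsOpen[τ] U := by
    intro b hb
    show U ∈ Filter.map (fun v => b + v) (⨅ V ∈ B, Filter.principal V)
    rw [Filter.mem_map]
    have hle : (⨅ V ∈ B, Filter.principal V) ≤ Filter.principal U := iInf₂_le U hU
    exact hle (Filter.mem_principal.2 fun u hu => hadd b hb u hu)
  exact hopen.mem_nhds h0

lemma exists_basic_of_mem_nhds (hne : ∃ U, U ∈ B)
    (hdir : ∀ U ∈ B, ∀ V ∈ B, ∃ T ∈ B, T ⊆ U ∧ T ⊆ V) {a : W} {s : Set W}
    (hs : s ∈ @nhds W (addTopologyOf B) a) :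
    ∃ U ∈ B, ∀ u ∈ U, a + u ∈ s := by
  letI τ := addTopologyOf B
  obtain ⟨t, hts, htopen, hat⟩ := mem_nhds_iff.1 hs
  have h1 : t ∈ Filter.map (fun v => a + v) (⨅ V ∈ B, Filter.principal V) := htopen a hat
  rw [Filter.mem_map] at h1
  obtain ⟨U, hU, hUsub⟩ := (mem_iInf_basic B hne hdir).1 h1
  exact ⟨U, hU, fun u hu => hts (hUsub hu)⟩

end AuxAddTop

lemma exists_net_limit [CompleteSpace K] {ι : Type} [Preorder ι] [Nonempty ι]
    [IsDirected ι (· ≤ ·)]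
    (c : ι → K) (hc : ∀ ε : ℝ, 0 < ε → ∃ i0, ∀ j ≥ i0, ∀ k ≥ i0, ‖c j - c k‖ < ε) :
    ∃ L, Filter.Tendsto c Filter.atTop (nhds L) := by
  haveI : (Filter.atTop : Filter ι).NeBot := Filter.atTop_neBot_iff.2 ⟨‹_›, ‹_›⟩
  have hcau : Cauchy (Filter.map c Filter.atTop) := by
    refine Metric.cauchy_iff.2 ⟨Filter.map_neBot, fun ε hε => ?_⟩
    obtain ⟨i0, hi0⟩ := hc ε hε
    refine ⟨c '' {j | i0 ≤ j}, Filter.image_mem_map (Filter.mem_atTop i0), ?_⟩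
    rintro _ ⟨j, hj, rfl⟩ _ ⟨k, hk, rfl⟩
    rw [dist_eq_norm]
    exact hi0 j hj k hk
  obtain ⟨L, hL⟩ := CompleteSpace.complete hcau
  exact ⟨L, hL⟩

lemma laurentBasic_nonempty : ∃ U, U ∈ laurentBasic K :=
  ⟨{f : LaurentSeries K | ∀ i, f.coeff i ∈ (Set.univ : Set K)},
    fun _ => Set.univ, fun _ => ⟨isOpen_univ, Set.mem_univ 0⟩, ⟨0, fun _ _ => rfl⟩, rfl⟩

lemma laurentBasic_directed : ∀ U ∈ laurentBasic K, ∀ V ∈ laurentBasic K,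
    ∃ T ∈ laurentBasic K, T ⊆ U ∧ T ⊆ V := by
  rintro _ ⟨U, hU, ⟨N, hN⟩, rfl⟩ _ ⟨V, hV, ⟨M, hM⟩, rfl⟩
  refine ⟨{f : LaurentSeries K | ∀ i, f.coeff i ∈ U i ∩ V i},
    ⟨fun i => U i ∩ V i,
      fun i => ⟨(hU i).1.inter (hV i).1, (hU i).2, (hV i).2⟩,
      ⟨max N M, fun i hi => by
        show U i ∩ V i = Set.univ
        rw [hN i (le_trans (le_max_left _ _) hi), hM i (le_trans (le_max_right _ _) hi),
          Set.univ_inter]⟩, rfl⟩,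
    fun f hf i => (hf i).1, fun f hf i => (hf i).2⟩

lemma laurent_master {q : ℕ} (hK : IsCharZeroLocalField K q) (C : ℤ → Set K)
    (hCc : ∀ i, IsClosed (C i)) (hCneg : ∀ i : ℤ, i < 0 → C i = {0}) :
    IsNetComplete (laurentTop K) {f : LaurentSeries K | ∀ i, f.coeff i ∈ C i} := by
  intro ι _ _ hdirι x hxA hcauchy
  haveI : IsDirected ι (· ≤ ·) := ⟨hdirι⟩
  haveI : (Filter.atTop : Filter ι).NeBot := Filter.atTop_neBot_iff.2 ⟨‹_›, ‹_›⟩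
  haveI : CompleteSpace K := hK.complete
  -- coefficientwise limits
  have key : ∀ m : ℤ, ∃ L, Filter.Tendsto (fun j => (x j).coeff m) Filter.atTop (nhds L) := by
    intro m
    apply exists_net_limit K
    intro ε hε
    set Us : ℤ → Set K := fun i => if i = m then {y : K | ‖y‖ < ε} else Set.univ with hUs
    have hUB : {f : LaurentSeries K | ∀ i, f.coeff i ∈ Us i} ∈ laurentBasic K := by
      refine ⟨Us, fun i => ?_, ⟨m + 1, fun i hi => ?_⟩, rfl⟩
      · by_cases hi : i = m
        · simp only [hUs, if_pos hi]
          exact ⟨isOpen_lt continuous_norm continuous_const, by simpa using hε⟩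
        · simp only [hUs, if_neg hi]
          exact ⟨isOpen_univ, Set.mem_univ 0⟩
      · have : i ≠ m := by omega
        simp [hUs, this]
    have hmem : {f : LaurentSeries K | ∀ i, f.coeff i ∈ Us i} ∈
        @nhds (LaurentSeries K) (laurentTop K) 0 := by
      refine basic_mem_nhds (laurentBasic K) hUB (fun i => ?_) (fun b hb u hu i => ?_)
      · by_cases hi : i = m <;> simp [hUs, hi, hε]
      · by_cases hi : i = m
        · have hb' := hb i; have hu' := hu i
          simp only [hUs, if_pos hi, Set.mem_setOf_eq, HahnSeries.coeff_add] at *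
          exact lt_of_le_of_lt (hK.nonarch _ _) (max_lt hb' hu')
        · simp [hUs, hi]
    obtain ⟨i0, hi0⟩ := hcauchy _ hmem
    refine ⟨i0, fun j hj k hk => ?_⟩
    have := hi0 j hj k hk m
    simpa [hUs, HahnSeries.coeff_sub] using this
  choose c hc using key
  have hcC : ∀ i, c i ∈ C i := fun i =>
    (hCc i).mem_of_tendsto (hc i) (Filter.Eventually.of_forall fun j => hxA j i)
  have hc0 : ∀ i : ℤ, i < 0 → c i = 0 := fun i hi => by
    have h := hcC i; rw [hCneg i hi] at h; exact h
  have hsupp : (Function.support c).IsPWO := by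
    have hsub : Function.support c ⊆ Set.Ici (0 : ℤ) := fun i hi =>
      le_of_not_gt fun h => hi (hc0 i h)
    exact (Set.IsWF.isPWO (s := Set.Ici (0 : ℤ)) bddBelow_Ici.wellFoundedOn_lt).mono hsub
  set a : LaurentSeries K := ⟨c, hsupp⟩ with ha
  have hacoeff : ∀ i, a.coeff i = c i := fun i => rfl
  refine ⟨a, fun i => hcC i, ?_⟩
  rw [Filter.tendsto_def]
  intro s hs
  obtain ⟨U, hUB, hUsub⟩ :=
    exists_basic_of_mem_nhds (laurentBasic K) (laurentBasic_nonempty K)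
      (laurentBasic_directed K) hs
  obtain ⟨Us, hUo, ⟨N, hN⟩, rfl⟩ := hUB
  have hev : ∀ᶠ j in Filter.atTop, ∀ i ∈ Finset.Icc (0 : ℤ) (N - 1),
      (x j).coeff i - c i ∈ Us i := by
    rw [Filter.eventually_all_finset]
    intro i _
    have h1 : Filter.Tendsto (fun j => (x j).coeff i - c i) Filter.atTop (nhds 0) := by
      simpa using (hc i).sub_const (c i)
    exact h1 ((hUo i).1.mem_nhds ((hUo i).2))
  filter_upwards [hev] with j hj
  have hmem : ∀ i, (x j - a).coeff i ∈ Us i := by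
    intro i
    rw [HahnSeries.coeff_sub, hacoeff]
    rcases lt_or_ge i 0 with h | h
    · have h1 : (x j).coeff i = 0 := by
        have h2 := hxA j i; rwa [hCneg i h, Set.mem_singleton_iff] at h2
      rw [h1, hc0 i h, sub_zero]
      exact (hUo i).2
    · rcases lt_or_ge i N with h2 | h2
      · exact hj i (Finset.mem_Icc.2 ⟨h, by omega⟩)
      · rw [hN i h2]; exact Set.mem_univ _
  have hfin := hUsub _ hmem
  have heq : a + (x j - a) = x j := by abel
  rw [heq] at hfin
  exact hfin

lemma mixedBasic_nonempty (q : ℕ) : ∃ U, U ∈ mixedBasic K q :=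
  ⟨{f : Mt K | ∀ i, f.1 i ∈ (Set.univ : Set K)},
    fun _ => Set.univ, fun _ => ⟨isOpen_univ, Set.mem_univ 0⟩,
    ⟨0, fun _ => Set.subset_univ _⟩, fun _ => ⟨0, fun _ _ => Set.subset_univ _⟩, rfl⟩

lemma mixedBasic_directed (q : ℕ) (hq : (1 : ℝ) ≤ q) :
    ∀ U ∈ mixedBasic K q, ∀ V ∈ mixedBasic K q,
    ∃ T ∈ mixedBasic K q, T ⊆ U ∧ T ⊆ V := by
  rintro _ ⟨U, hU, ⟨c1, hc1⟩, hT1, rfl⟩ _ ⟨V, hV, ⟨c2, hc2⟩, hT2, rfl⟩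
  have hball : ∀ c1 c2 : ℤ, c1 ≤ c2 →
      {x : K | ‖x‖ ≤ (q : ℝ) ^ (-c2)} ⊆ {x : K | ‖x‖ ≤ (q : ℝ) ^ (-c1)} := by
    intro d1 d2 hd x hx
    exact le_trans hx (zpow_le_zpow_right₀ hq (by omega))
  refine ⟨{f : Mt K | ∀ i, f.1 i ∈ U i ∩ V i},
    ⟨fun i => U i ∩ V i,
      fun i => ⟨(hU i).1.inter (hV i).1, (hU i).2, (hV i).2⟩,
      ⟨max c1 c2, fun i => Set.subset_inter
        ((hball c1 (max c1 c2) (le_max_left _ _)).trans (hc1 i))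
        ((hball c2 (max c1 c2) (le_max_right _ _)).trans (hc2 i))⟩,
      fun l => ?_, rfl⟩,
    fun f hf i => (hf i).1, fun f hf i => (hf i).2⟩
  obtain ⟨i1, hi1⟩ := hT1 l
  obtain ⟨i2, hi2⟩ := hT2 l
  exact ⟨max i1 i2, fun i hi => Set.subset_inter
    (hi1 i (le_trans (le_max_left _ _) hi)) (hi2 i (le_trans (le_max_right _ _) hi))⟩

lemma mixed_master {q : ℕ} (hK : IsCharZeroLocalField K q) (C : ℤ → Set K)
    (hCc : ∀ i, IsClosed (C i)) (hC1 : ∀ i, ∀ y ∈ C i, ‖y‖ ≤ 1) :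
    IsNetComplete (mixedTop K q) {f : Mt K | ∀ i, f.1 i ∈ C i} := by
  have hq1 : (1 : ℝ) < q := by exact_mod_cast hK.one_lt_q
  have hq0 : (0 : ℝ) < q := lt_trans one_pos hq1
  have hqle : (1 : ℝ) ≤ q := le_of_lt hq1
  have hsmall : ∀ ε : ℝ, 0 < ε → ∃ c0 : ℤ, (q : ℝ) ^ (-c0) < ε := by
    intro ε hε
    obtain ⟨n, hn⟩ := exists_pow_lt_of_lt_one hε (inv_lt_one_of_one_lt₀ hq1)
    refine ⟨(n : ℤ), ?_⟩
    have : (q : ℝ) ^ (-(n : ℤ)) = ((q : ℝ)⁻¹) ^ n := by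
      rw [zpow_neg, zpow_natCast, inv_pow]
    rw [this]; exact hn
  have hnorm_sub : ∀ u v : K, ‖u - v‖ ≤ max ‖u‖ ‖v‖ := by
    intro u v
    have h := hK.nonarch u (-v)
    simpa [sub_eq_add_neg] using h
  intro ι _ _ hdirι x hxA hcauchy
  haveI : IsDirected ι (· ≤ ·) := ⟨hdirι⟩
  haveI : (Filter.atTop : Filter ι).NeBot := Filter.atTop_neBot_iff.2 ⟨‹_›, ‹_›⟩
  haveI : CompleteSpace K := hK.complete
  -- the uniform Cauchy estimate on (-∞, M)
  have hUC : ∀ M c0 : ℤ, ∃ j0 : ι, ∀ j ≥ j0, ∀ k ≥ j0, ∀ i : ℤ, i < M →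
      ‖(x j).1 i - (x k).1 i‖ < (q : ℝ) ^ (-c0) := by
    intro M c0
    set Vs : ℤ → Set K := fun i =>
      if i < M then {y : K | ‖y‖ < (q : ℝ) ^ (-c0)} else Set.univ with hVs
    have hpos : (0 : ℝ) < (q : ℝ) ^ (-c0) := zpow_pos hq0 _
    have hUB : {f : Mt K | ∀ i, f.1 i ∈ Vs i} ∈ mixedBasic K q := by
      refine ⟨Vs, fun i => ?_, ⟨c0 + 1, fun i => ?_⟩, fun l => ⟨M, fun i hi => ?_⟩, rfl⟩
      · by_cases hi : i < M
        · simp only [hVs, if_pos hi]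
          exact ⟨isOpen_lt continuous_norm continuous_const, by simpa using hpos⟩
        · simp only [hVs, if_neg hi]
          exact ⟨isOpen_univ, Set.mem_univ 0⟩
      · by_cases hi : i < M
        · simp only [hVs, if_pos hi]
          intro y hy
          exact lt_of_le_of_lt hy (zpow_lt_zpow_right₀ hq1 (by omega))
        · simp [hVs, hi]
      · have : ¬ i < M := by omega
        simp [hVs, this]
    have hmem : {f : Mt K | ∀ i, f.1 i ∈ Vs i} ∈ @nhds (Mt K) (mixedTop K q) 0 := by
      refine basic_mem_nhds (mixedBasic K q) hUB (fun i => ?_) (fun b hb u hu i => ?_)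
      · by_cases hi : i < M
        · simp only [hVs, if_pos hi, Set.mem_setOf_eq]; simpa using hpos
        · simp [hVs, hi]
      · by_cases hi : i < M
        · have hb' := hb i; have hu' := hu i
          simp only [hVs, if_pos hi, Set.mem_setOf_eq] at *
          have : (b + u).1 i = b.1 i + u.1 i := rfl
          rw [this]
          exact lt_of_le_of_lt (hK.nonarch _ _) (max_lt hb' hu')
        · simp [hVs, hi]
    obtain ⟨j0, hj0⟩ := hcauchy _ hmem
    refine ⟨j0, fun j hj k hk i hi => ?_⟩
    have h1 := hj0 j hj k hk i
    simp only [hVs, if_pos hi, Set.mem_setOf_eq] at h1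
    have h2 : (x j - x k).1 i = (x j).1 i - (x k).1 i := rfl
    rwa [h2] at h1
  -- coefficientwise limits
  have key : ∀ m : ℤ, ∃ L, Filter.Tendsto (fun j => (x j).1 m) Filter.atTop (nhds L) := by
    intro m
    apply exists_net_limit K
    intro ε hε
    obtain ⟨c0, hc0⟩ := hsmall ε hε
    obtain ⟨j0, hj0⟩ := hUC (m + 1) c0
    exact ⟨j0, fun j hj k hk =>
      lt_trans (hj0 j hj k hk m (by omega)) hc0⟩
  choose c hc using key
  have hcC : ∀ i, c i ∈ C i := fun i =>
    (hCc i).mem_of_tendsto (hc i) (Filter.Eventually.of_forall fun j => hxA j i)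
  have hnorm1 : ∀ i, ‖c i‖ ≤ 1 := fun i => hC1 i _ (hcC i)
  -- uniform estimate against the limit
  have hULB : ∀ M c0 : ℤ, ∃ j0 : ι, ∀ j ≥ j0, ∀ i : ℤ, i < M →
      ‖(x j).1 i - c i‖ ≤ (q : ℝ) ^ (-c0) := by
    intro M c0
    obtain ⟨j0, hj0⟩ := hUC M c0
    refine ⟨j0, fun j hj i hi => ?_⟩
    have hclosed : IsClosed {y : K | ‖(x j).1 i - y‖ ≤ (q : ℝ) ^ (-c0)} :=
      isClosed_le ((continuous_const.sub continuous_id).norm) continuous_const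
    refine hclosed.mem_of_tendsto (hc i) ?_
    filter_upwards [Filter.eventually_ge_atTop j0] with k hk
    exact le_of_lt (hj0 j hj k hk i hi)
  -- the limit tends to 0 at -∞
  have hbot : Filter.Tendsto c Filter.atBot (nhds (0 : K)) := by
    rw [NormedAddCommGroup.tendsto_nhds_zero]
    intro ε hε
    obtain ⟨c0, hc0⟩ := hsmall ε hε
    obtain ⟨j0, hj0⟩ := hULB 0 c0
    have hx0 := (x j0).2.2
    rw [NormedAddCommGroup.tendsto_nhds_zero] at hx0
    have hpos : (0 : ℝ) < (q : ℝ) ^ (-c0) := zpow_pos hq0 _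
    filter_upwards [hx0 _ hpos, Filter.eventually_lt_atBot (0 : ℤ)] with i h1 h2
    have h3 : ‖(x j0).1 i - c i‖ ≤ (q : ℝ) ^ (-c0) := hj0 j0 (le_refl j0) i h2
    have h4 : c i = (x j0).1 i - ((x j0).1 i - c i) := by ring
    rw [h4]
    exact lt_of_le_of_lt (hnorm_sub _ _)
      (max_lt (lt_trans h1 hc0) (lt_of_le_of_lt h3 hc0))
  set a : Mt K := ⟨c, ⟨⟨1, hnorm1⟩, hbot⟩⟩ with ha
  refine ⟨a, fun i => hcC i, ?_⟩
  rw [Filter.tendsto_def]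
  intro s hs
  obtain ⟨U, hUB, hUsub⟩ :=
    exists_basic_of_mem_nhds (mixedBasic K q) (mixedBasic_nonempty K q)
      (mixedBasic_directed K q hqle) hs
  obtain ⟨Vs, hVo, ⟨c0, hc0⟩, htail, rfl⟩ := hUB
  obtain ⟨i1, hi1⟩ := htail 0
  obtain ⟨j0, hj0⟩ := hULB i1 (c0)
  filter_upwards [Filter.eventually_ge_atTop j0] with j hj
  have hmem : ∀ i, (x j - a).1 i ∈ Vs i := by
    intro i
    have hsub : (x j - a).1 i = (x j).1 i - c i := rfl
    rw [hsub]
    rcases lt_or_ge i i1 with h | h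
    · exact hc0 i (hj0 j hj i h)
    · refine hi1 i h ?_
      show ‖(x j).1 i - c i‖ ≤ (q : ℝ) ^ (-(0 : ℤ))
      rw [neg_zero, zpow_zero]
      exact le_trans (hnorm_sub _ _) (max_le (hC1 i _ (hxA j i)) (hnorm1 i))
  have hfin := hUsub _ hmem
  have heq : a + (x j - a) = x j := by abel
  rw [heq] at hfin
  exact hfin

/-- The ring of integers `K[[t]]` is a complete `𝒪`-submodule of `K((t))`,
and the ring of integers `𝒪{{t}}` is a complete `𝒪`-submodule of `K{{t}}` (every Cauchy net
in them converges to an element of them); consequently the rank-two rings of integers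
`𝒪 + tK[[t]] ⊆ K((t))` and `Σ_{i<0} 𝔭 t^i + Σ_{i≥0} 𝒪 t^i ⊆ K{{t}}` are also complete. -/
theorem statement12 (q : ℕ) (hK : IsCharZeroLocalField K q) :
    IsNetComplete (laurentTop K) (laurentIntegers K) ∧
    IsNetComplete (mixedTop K q) (mixedIntegers K) ∧
    IsNetComplete (laurentTop K) (laurentRankTwo K) ∧
    IsNetComplete (mixedTop K q) (mixedRankTwo K q) := by
  have hq1 : (1 : ℝ) ≤ q := by
    have := hK.one_lt_q; exact_mod_cast le_of_lt this
  refine ⟨?_, ?_, ?_, ?_⟩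
  · -- K[[t]]
    have heq : laurentIntegers K =
        {f : LaurentSeries K | ∀ i, f.coeff i ∈
          (fun i : ℤ => if i < 0 then ({0} : Set K) else Set.univ) i} := by
      ext f
      simp only [laurentIntegers, Set.mem_setOf_eq]
      constructor
      · intro h i
        by_cases hi : i < 0
        · simp [hi, h i hi]
        · simp [hi]
      · intro h i hi
        have := h i
        simpa [hi] using this
    rw [heq]
    refine laurent_master K hK _ (fun i => ?_) (fun i hi => if_pos hi)
    by_cases hi : i < 0 <;> simp [hi, isClosed_singleton]
  · -- O{{t}}
    have heq : mixedIntegers K =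
        {f : Mt K | ∀ i, f.1 i ∈ (fun _ : ℤ => {y : K | ‖y‖ ≤ 1}) i} := rfl
    rw [heq]
    exact mixed_master K hK _ (fun i => isClosed_le continuous_norm continuous_const)
      (fun i y hy => hy)
  · -- O + t K[[t]]
    have heq : laurentRankTwo K =
        {f : LaurentSeries K | ∀ i, f.coeff i ∈
          (fun i : ℤ => if i < 0 then ({0} : Set K)
            else if i = 0 then {y : K | ‖y‖ ≤ 1} else Set.univ) i} := by
      ext f
      simp only [laurentRankTwo, Set.mem_setOf_eq]
      constructor
      · rintro ⟨h1, h2⟩ i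
        by_cases hi : i < 0
        · simp [hi, h1 i hi]
        · by_cases hi0 : i = 0
          · subst hi0; simp [h2]
          · simp [hi, hi0]
      · intro h
        constructor
        · intro i hi
          have := h i
          simpa [hi] using this
        · have := h 0
          simpa using this
    rw [heq]
    refine laurent_master K hK _ (fun i => ?_) (fun i hi => if_pos hi)
    by_cases hi : i < 0
    · simp [hi, isClosed_singleton]
    · by_cases hi0 : i = 0 <;>
        simp [hi, hi0, isClosed_le continuous_norm continuous_const]
  · -- rank two in K{{t}}
    have heq : mixedRankTwo K q =
        {f : Mt K | ∀ i, f.1 i ∈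
          (fun i : ℤ => if i < 0 then {y : K | ‖y‖ ≤ ((q : ℝ))⁻¹}
            else {y : K | ‖y‖ ≤ 1}) i} := by
      ext f
      simp only [mixedRankTwo, Set.mem_setOf_eq]
      constructor
      · rintro ⟨h1, h2⟩ i
        by_cases hi : i < 0
        · simp only [if_pos hi]; exact h1 i hi
        · simp only [if_neg hi]; exact h2 i (by omega)
      · intro h
        constructor
        · intro i hi
          have := h i
          rwa [if_pos hi] at this
        · intro i hi
          have := h i
          rwa [if_neg (by omega)] at this
    rw [heq]
    refine mixed_master K hK _ (fun i => ?_) (fun i y hy => ?_)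
    · by_cases hi : i < 0 <;>
        simp [hi, isClosed_le continuous_norm continuous_const]
    · by_cases hi : i < 0
      · rw [if_pos hi] at hy
        exact le_trans hy (inv_le_one_of_one_le₀ hq1)
      · rwa [if_neg hi] at hy

end TwoDimLF
end
end
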